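/- Let Q be a finite type, R : Q → Q → Prop a transition relation, F ⊆ Q a set of accepting states, and q ∈ Q. Then the following are equivalent: (1) there exists an infinite run f : ℕ → Q with f 0 = q, R (f n) (f (n+1)) for all n, and {n | f n ∈ Q with f n ∈ F} infinite; (2) there exists a state c ∈ Q reachable from q via a finite R-path, together with a finite R-cycle from c back to c that visits at least one state of F. -/

import Mathlib

/-- over a finite state space `Q` with transition relation `R` and accepting
set `F`, there exists an infinite run from `q` visiting `F` infinitely often iff there
exists a state `c` reachable from `q` by a finite `R`-path together with a finite `R`-cycle
from `c` back to `c` that visits `F`. -/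
theorem accepting_run_iff_lasso {Q : Type} [Fintype Q]
    (R : Q → Q → Prop) (F : Set Q) (q : Q) :
    (∃ f : ℕ → Q, f 0 = q ∧ (∀ n, R (f n) (f (n + 1))) ∧ {n : ℕ | f n ∈ F}.Infinite) ↔
      (∃ c : Q,
        (∃ (x : ℕ → Q) (k : ℕ), x 0 = q ∧ x k = c ∧ ∀ i < k, R (x i) (x (i + 1))) ∧
        (∃ (y : ℕ → Q) (m : ℕ), 1 ≤ m ∧ y 0 = c ∧ y m = c ∧
          (∀ i < m, R (y i) (y (i + 1))) ∧ ∃ i ≤ m, y i ∈ F)) := by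
  constructor
  · rintro ⟨f, hf0, hR, hInf⟩
    -- pigeonhole: some state a appears infinitely often among F-visits
    have : ∃ a : Q, {n : ℕ | f n ∈ F ∧ f n = a}.Infinite := by
      by_contra h
      push_neg at h
      have : {n : ℕ | f n ∈ F} ⊆ ⋃ a ∈ (Finset.univ : Finset Q), {n : ℕ | f n ∈ F ∧ f n = a} := by
        intro n hn
        simp only [Set.mem_iUnion]
        exact ⟨f n, by simp, hn, rfl⟩
      exact hInf ((Set.Finite.biUnion (Finset.univ : Finset Q).finite_toSet
        (fun a _ => h a)).subset this)
    obtain ⟨a, hA⟩ := this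
    obtain ⟨n₁, hn₁⟩ := hA.nonempty
    obtain ⟨n₂, hn₂, hlt⟩ := hA.exists_gt n₁
    refine ⟨a, ⟨f, n₁, hf0, hn₁.2, fun i _ => hR i⟩,
      ⟨fun i => f (n₁ + i), n₂ - n₁, by omega, by simpa using hn₁.2, ?_, ?_, 0, by omega, ?_⟩⟩
    · show f (n₁ + (n₂ - n₁)) = a
      have : n₁ + (n₂ - n₁) = n₂ := by omega
      rw [this, hn₂.2]
    · intro i _
      show R (f (n₁ + i)) (f (n₁ + (i + 1)))
      have : n₁ + (i + 1) = (n₁ + i) + 1 := by omega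
      rw [this]
      exact hR _
    · simpa [hn₁.2] using hn₁.1
  · rintro ⟨c, ⟨x, k, hx0, hxk, hxR⟩, ⟨y, m, hm, hy0, hym, hyR, i₀, hi₀m, hi₀F⟩⟩
    -- wlog i₀ < m: if i₀ = m, use 0 instead
    have hvis : ∃ j < m, y j ∈ F := by
      rcases lt_or_eq_of_le hi₀m with h | h
      · exact ⟨i₀, h, hi₀F⟩
      · exact ⟨0, by omega, by rw [hy0, ← hym, ← h]; exact hi₀F⟩
    obtain ⟨j, hjm, hjF⟩ := hvis
    set f : ℕ → Q := fun n => if n < k then x n else y ((n - k) % m) with hfdef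
    have hfx : ∀ n ≤ k, f n = x n := by
      intro n hn
      rcases lt_or_eq_of_le hn with h | h
      · simp [hfdef, h]
      · subst h
        simp [hfdef, hy0, ← hxk]
    have hfy : ∀ n, f (k + n) = y (n % m) := by
      intro n
      simp [hfdef, Nat.add_sub_cancel_left]
    refine ⟨f, by rw [hfx 0 (Nat.zero_le k), hx0], ?_, ?_⟩
    · intro n
      rcases lt_or_ge n k with h | h
      · rw [hfx n (le_of_lt h), hfx (n + 1) h]
        exact hxR n h
      · obtain ⟨d, rfl⟩ := Nat.exists_eq_add_of_le h
        have h1 : k + d + 1 = k + (d + 1) := by omega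
        rw [hfy d, h1, hfy (d + 1)]
        set r := d % m with hr
        have hrm : r < m := Nat.mod_lt _ (by omega)
        have : (d + 1) % m = (r + 1) % m := by
          conv_lhs => rw [← Nat.mod_add_mod]
        rw [this]
        rcases lt_or_eq_of_le (Nat.succ_le_of_lt hrm) with h2 | h2
        · rw [Nat.mod_eq_of_lt h2]
          exact hyR r hrm
        · have h2' : r + 1 = m := h2
          rw [h2', Nat.mod_self]
          have : y 0 = y m := by rw [hy0, hym]
          rw [this, ← h2]
          exact hyR r hrm
    · apply Set.infinite_of_injective_forall_mem
        (f := fun t : ℕ => k + (j + t * m))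
      · intro a b hab
        simp only at hab
        have := Nat.eq_of_mul_eq_mul_right (show 0 < m by omega) (by omega : a * m = b * m)
        exact this
      · intro t
        show f (k + (j + t * m)) ∈ F
        rw [hfy]
        have : (j + t * m) % m = j := by
          rw [Nat.add_mul_mod_self_right, Nat.mod_eq_of_lt hjm]
        rw [this]
        exact hjF
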